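/- Let V = ⊕_{i∈ℤ} ℂL_i be the Novikov algebra with product L_i∘L_j = −L_{i+j} (trivial Lie bracket). Then bilinear forms α_0, α_1, α_2, α_3 : V×V → ℂ satisfy the identities (N1)–(N5) if and only if α_0 = 0, α_2 = 0, and there exist functions f, g : ℤ → ℂ such that α_3(L_i, L_j) = f(i+j) and α_1(L_i, L_j) = g(i+j) for all i, j ∈ ℤ. -/

import Mathlib

/-- The Novikov product on `V = ⊕_{i∈ℤ} ℂL_i` (realized as `ℤ →₀ ℂ`) determined by
`L_i ∘ L_j = −L_{i+j}`. -/
noncomputable def circLW (u v : ℤ →₀ ℂ) : ℤ →₀ ℂ :=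
  u.sum fun i x => v.sum fun j y => Finsupp.single (i + j) (-(x * y))

/-- The basis vector `L_i`. -/
noncomputable def LV (i : ℤ) : ℤ →₀ ℂ := Finsupp.single i 1

@[simp] lemma circ_zero_left (v : ℤ →₀ ℂ) : circLW 0 v = 0 := by simp [circLW]
@[simp] lemma circ_zero_right (u : ℤ →₀ ℂ) : circLW u 0 = 0 := by simp [circLW]

lemma circ_single (i j : ℤ) (x y : ℂ) :
    circLW (Finsupp.single i x) (Finsupp.single j y) = Finsupp.single (i+j) (-(x*y)) := by
  unfold circLW
  rw [Finsupp.sum_single_index, Finsupp.sum_single_index] <;> simp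

lemma circ_add_left (u u' v : ℤ →₀ ℂ) : circLW (u+u') v = circLW u v + circLW u' v := by
  unfold circLW
  rw [Finsupp.sum_add_index']
  · intro i; simp
  · intro i x x'
    rw [← Finsupp.sum_add]
    congr 1; ext j y
    simp only [add_mul, neg_add, Finsupp.single_add]

lemma circ_add_right (u v v' : ℤ →₀ ℂ) : circLW u (v+v') = circLW u v + circLW u v' := by
  unfold circLW
  rw [← Finsupp.sum_add]
  congr 1; ext i x
  rw [Finsupp.sum_add_index']
  · intro j; simp
  · intro j y y'
    simp only [mul_add, neg_add, Finsupp.single_add]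

lemma single_eq_smul_LV (i : ℤ) (x : ℂ) : Finsupp.single i x = x • LV i := by
  rw [LV, Finsupp.smul_single', mul_one]

lemma apply_single (β : (ℤ →₀ ℂ) →ₗ[ℂ] (ℤ →₀ ℂ) →ₗ[ℂ] ℂ) (i j : ℤ) (x y : ℂ) :
    β (Finsupp.single i x) (Finsupp.single j y) = x * y * β (LV i) (LV j) := by
  rw [single_eq_smul_LV i x, single_eq_smul_LV j y]
  simp only [map_smul, LinearMap.smul_apply, smul_eq_mul]
  ring

lemma bilin_eq (β γ : (ℤ →₀ ℂ) →ₗ[ℂ] (ℤ →₀ ℂ) →ₗ[ℂ] ℂ)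
    (h : ∀ i j : ℤ, β (LV i) (LV j) = γ (LV i) (LV j)) : ∀ a b, β a b = γ a b := by
  intro a b
  induction a using Finsupp.induction_linear with
  | zero => simp
  | add f g hf hg => simp only [map_add, LinearMap.add_apply, hf, hg]
  | single i x =>
    induction b using Finsupp.induction_linear with
    | zero => simp
    | add f g hf hg => simp only [map_add, hf, hg]
    | single j y => rw [apply_single, apply_single, h]

lemma ext_circ (β γ : (ℤ →₀ ℂ) →ₗ[ℂ] (ℤ →₀ ℂ) →ₗ[ℂ] ℂ)
    (h : ∀ i j k : ℤ, β (LV i) (LV (k + j)) = γ (LV (i + j)) (LV k)) :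
    ∀ a b c, β a (circLW c b) = γ (circLW a b) c := by
  intro a b c
  induction a using Finsupp.induction_linear with
  | zero => simp
  | add f g hf hg => simp only [map_add, LinearMap.add_apply, circ_add_left, hf, hg]
  | single i x =>
    induction b using Finsupp.induction_linear with
    | zero => simp
    | add f g hf hg => simp only [map_add, LinearMap.add_apply, circ_add_right, circ_add_left, hf, hg]
    | single j y =>
      induction c using Finsupp.induction_linear with
      | zero => simp
      | add f g hf hg => simp only [map_add, LinearMap.add_apply, circ_add_left, hf, hg]
      | single k z =>
        rw [circ_single, circ_single, apply_single, apply_single, h]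
        ring

lemma ext_circ_comm (β : (ℤ →₀ ℂ) →ₗ[ℂ] (ℤ →₀ ℂ) →ₗ[ℂ] ℂ) :
    ∀ a b c, β (circLW a b) c = β (circLW b a) c := by
  intro a b c
  induction a using Finsupp.induction_linear with
  | zero => simp
  | add f g hf hg => simp only [circ_add_left, circ_add_right, map_add, LinearMap.add_apply, hf, hg]
  | single i x =>
    induction b using Finsupp.induction_linear with
    | zero => simp
    | add f g hf hg => simp only [circ_add_left, circ_add_right, map_add, LinearMap.add_apply, hf, hg]
    | single j y =>
      rw [circ_single, circ_single, add_comm j i, mul_comm y x]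

lemma circ_LV (i j : ℤ) : circLW (LV i) (LV j) = -(LV (i+j)) := by
  rw [LV, LV, circ_single, mul_one, LV, Finsupp.single_neg]

/-- For the Novikov algebra `V = ⊕_{i∈ℤ} ℂL_i` with
`L_i∘L_j = −L_{i+j}` (trivial Lie bracket): bilinear forms `α_0, α_1, α_2, α_3`
satisfy (N1)–(N5) if and only if `α_0 = 0`, `α_2 = 0`, and there are functions
`f, g : ℤ → ℂ` with `α_3(L_i,L_j) = f(i+j)` and `α_1(L_i,L_j) = g(i+j)`. -/
theorem stmt_16 (α0 α1 α2 α3 : (ℤ →₀ ℂ) →ₗ[ℂ] (ℤ →₀ ℂ) →ₗ[ℂ] ℂ) :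
    -- the identities (N1)–(N5) ...
    ((∀ a b : ℤ →₀ ℂ, α0 a b = - α0 b a)
      ∧ (∀ a b : ℤ →₀ ℂ, α1 a b = α1 b a)
      ∧ (∀ a b : ℤ →₀ ℂ, α2 a b = - α2 b a)
      ∧ (∀ a b : ℤ →₀ ℂ, α3 a b = α3 b a)
      -- (N2)
      ∧ (∀ a b c : ℤ →₀ ℂ, α3 a (circLW c b) = α3 (circLW a b) c
          ∧ α3 (circLW a b) c = α3 (circLW b a) c)
      -- (N3)
      ∧ (∀ a b c : ℤ →₀ ℂ, α2 a (circLW b c) + α2 (circLW b a) c = α2 (circLW a b) c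
          ∧ α2 (circLW a b) c = α2 a (circLW c b))
      -- (N4)
      ∧ (∀ a b c : ℤ →₀ ℂ, α1 a (circLW c b) = α1 (circLW a b) c)
      -- (N5)
      ∧ (∀ a b c : ℤ →₀ ℂ, α0 (circLW c a) b - α0 (circLW c b) a
          = α0 (circLW a b) c - α0 (circLW a c) b))
    -- ... hold if and only if:
    ↔ ((∀ a b : ℤ →₀ ℂ, α0 a b = 0)
        ∧ (∀ a b : ℤ →₀ ℂ, α2 a b = 0)
        ∧ ∃ f g : ℤ → ℂ, ∀ i j : ℤ,
            α3 (LV i) (LV j) = f (i + j) ∧ α1 (LV i) (LV j) = g (i + j)) := by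
  constructor
  · rintro ⟨h0s, h1s, h2s, h3s, hN2, hN3, hN4, hN5⟩
    have key0 : ∀ i j : ℤ, α0 (LV i) (LV j) = 0 := by
      have H : ∀ a b : ℤ, α0 (LV (a+b)) (LV 0) = 3 * α0 (LV a) (LV b) := by
        intro a b
        have h5 := hN5 (LV a) (LV b) (LV 0)
        rw [circ_LV, circ_LV, circ_LV, circ_LV] at h5
        simp only [map_neg, LinearMap.neg_apply, zero_add, add_zero] at h5
        linear_combination h5 - h0s (LV a) (LV b)
      intro i j
      have e1 := H i j
      have e2 := H j i
      rw [add_comm j i] at e2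
      have e3 := h0s (LV i) (LV j)
      linear_combination (e2 - e1 + 3 * e3) / 6
    have key2 : ∀ i j : ℤ, α2 (LV i) (LV j) = 0 := by
      intro i j
      have h3 := (hN3 (LV i) (LV 0) (LV j)).1
      rw [circ_LV, circ_LV, circ_LV] at h3
      simp only [map_neg, LinearMap.neg_apply, zero_add, add_zero] at h3
      linear_combination -h3
    refine ⟨?_, ?_, fun n => α3 (LV n) (LV 0), fun n => α1 (LV n) (LV 0), ?_⟩
    · intro a b
      have := bilin_eq α0 0 (fun i j => by simpa using key0 i j) a b
      simpa using this
    · intro a b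
      have := bilin_eq α2 0 (fun i j => by simpa using key2 i j) a b
      simpa using this
    · intro i j
      constructor
      · have h2 := (hN2 (LV i) (LV j) (LV 0)).1
        rw [circ_LV, circ_LV] at h2
        simp only [map_neg, LinearMap.neg_apply, zero_add] at h2
        linear_combination -h2
      · have h4 := hN4 (LV i) (LV j) (LV 0)
        rw [circ_LV, circ_LV] at h4
        simp only [map_neg, LinearMap.neg_apply, zero_add] at h4
        linear_combination -h4
  · rintro ⟨hz0, hz2, f, g, hfg⟩
    refine ⟨?_, ?_, ?_, ?_, ?_, ?_, ?_, ?_⟩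
    · intro a b; rw [hz0, hz0, neg_zero]
    · intro a b
      have := bilin_eq α1 α1.flip
        (fun i j => by rw [LinearMap.flip_apply, (hfg i j).2, (hfg j i).2, add_comm]) a b
      rwa [LinearMap.flip_apply] at this
    · intro a b; rw [hz2, hz2, neg_zero]
    · intro a b
      have := bilin_eq α3 α3.flip
        (fun i j => by rw [LinearMap.flip_apply, (hfg i j).1, (hfg j i).1, add_comm]) a b
      rwa [LinearMap.flip_apply] at this
    · intro a b c
      refine ⟨?_, ext_circ_comm α3 a b c⟩
      exact ext_circ α3 α3 (fun i j k => by
        rw [(hfg i (k+j)).1, (hfg (i+j) k).1, show i+(k+j) = i+j+k from by ring]) a b c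
    · intro a b c
      constructor <;> simp [hz2]
    · exact ext_circ α1 α1 (fun i j k => by
        rw [(hfg i (k+j)).2, (hfg (i+j) k).2, show i+(k+j) = i+j+k from by ring])
    · intro a b c; simp [hz0]
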